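/- Invariance under exchangeability: let X be an ℝ^p-valued random vector and Y = (Y_1,…,Y_q) an ℝ^q-valued random vector with non-degenerate components, all defined on a common probability space, and assume the combined random vector (X,Y) ∈ ℝ^{p+q} is exchangeable, i.e., its distribution is invariant under every permutation of its p+q components. Then T(Y_σ|X) = T(Y|X) for every permutation σ of {1,…,q}, where Y_σ := (Y_{σ(1)},…,Y_{σ(q)}). -/

import Mathlib

open MeasureTheory ProbabilityTheory

/-- Azadkia–Chatterjee's rank correlation `ξ(Y | m)` of a real random variable `Y`
given a sub-σ-algebra `m`. -/
noncomputable def xiSigma {Ω : Type*} (m : MeasurableSpace Ω) [MeasurableSpace Ω]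
    (P : Measure Ω) (Y : Ω → ℝ) : ℝ :=
  (∫ y, variance (P[Set.indicator {ω | y ≤ Y ω} (fun _ => (1 : ℝ)) | m]) P ∂(P.map Y)) /
  (∫ y, variance (Set.indicator {ω | y ≤ Y ω} (fun _ => (1 : ℝ))) P ∂(P.map Y))

/-- Azadkia–Chatterjee's rank correlation `ξ(Y | X)`: conditioning on the σ-algebra
generated by the random vector `X`. -/
noncomputable def xi {Ω α : Type*} [MeasurableSpace Ω] [MeasurableSpace α]
    (P : Measure Ω) (Y : Ω → ℝ) (X : Ω → α) : ℝ :=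
  xiSigma (MeasurableSpace.comap X inferInstance) P Y

/-- The σ-algebra generated by the response variables with index `< i`,
i.e. by `(Y_1, …, Y_{i-1})`; for `i = 0` it is the trivial σ-algebra `⊥`,
so that `xiSigma (sigmaPast Y 0) P (Y 0) = ξ(Y_1 | ∅) = 0`. -/
def sigmaPast {Ω : Type*} {q : ℕ} (Y : Fin q → Ω → ℝ) (i : Fin q) :
    MeasurableSpace Ω :=
  ⨆ j : Fin q, ⨆ _ : j < i, MeasurableSpace.comap (Y j) inferInstance

/-- The extension `T(Y | X)` of Azadkia–Chatterjee's rank correlation to a vector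
`Y = (Y_1, …, Y_q)` of response variables, given the predictor vector `X`:
`T(Y|X) = 1 − (q − ∑_i ξ(Y_i | (X,Y_{i−1},…,Y_1))) / (q − ∑_i ξ(Y_i | (Y_{i−1},…,Y_1)))`. -/
noncomputable def T {Ω α : Type*} [MeasurableSpace Ω] [MeasurableSpace α]
    (P : Measure Ω) {q : ℕ} (Y : Fin q → Ω → ℝ) (X : Ω → α) : ℝ :=
  1 - ((q : ℝ) - ∑ i, xiSigma (MeasurableSpace.comap X inferInstance ⊔ sigmaPast Y i) P (Y i)) /
      ((q : ℝ) - ∑ i, xiSigma (sigmaPast Y i) P (Y i))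

/-- A real random variable is non-degenerate if it is not almost surely constant. -/
def Nondegenerate {Ω : Type*} [MeasurableSpace Ω] (P : Measure Ω) (Y : Ω → ℝ) : Prop :=
  ¬ ∃ c : ℝ, ∀ᵐ ω ∂P, Y ω = c

/-! ### Auxiliary lemmas -/

section Aux

lemma comap_pair_eq {Ω α β : Type*} [mα : MeasurableSpace α] [mβ : MeasurableSpace β]
    (W : Ω → α) (V : Ω → β) :
    MeasurableSpace.comap (fun ω => (W ω, V ω)) inferInstance
      = MeasurableSpace.comap W inferInstance ⊔ MeasurableSpace.comap V inferInstance := by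
  show MeasurableSpace.comap _ (mα.comap Prod.fst ⊔ mβ.comap Prod.snd) = _
  rw [MeasurableSpace.comap_sup, MeasurableSpace.comap_comp, MeasurableSpace.comap_comp]
  rfl

lemma comap_tuple_eq {Ω ι : Type*} {α : ι → Type*} [mα : ∀ i, MeasurableSpace (α i)]
    (Y : ∀ i, Ω → α i) :
    MeasurableSpace.comap (fun ω i => Y i ω) inferInstance
      = ⨆ i, MeasurableSpace.comap (Y i) inferInstance := by
  show MeasurableSpace.comap _ (⨆ i, (mα i).comap fun (b : ∀ i, α i) => b i) = _
  rw [MeasurableSpace.comap_iSup]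
  exact iSup_congr fun i => by rw [MeasurableSpace.comap_comp]; rfl

lemma sigmaPast_eq {Ω : Type*} {q : ℕ} (Y : Fin q → Ω → ℝ) (i : Fin q) :
    sigmaPast Y i
      = MeasurableSpace.comap (fun ω (j : {j : Fin q // j < i}) => Y j.1 ω) inferInstance := by
  rw [comap_tuple_eq (fun (j : {j : Fin q // j < i}) => Y j.1), sigmaPast]
  rw [iSup_subtype]

lemma evariance_congr' {Ω : Type*} [MeasurableSpace Ω] {f g : Ω → ℝ} {P : Measure Ω}
    (h : f =ᵐ[P] g) : evariance f P = evariance g P := by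
  unfold evariance
  rw [integral_congr_ae h]
  exact lintegral_congr_ae (h.mono fun ω hω => by simp only [hω])

lemma variance_congr' {Ω : Type*} [MeasurableSpace Ω] {f g : Ω → ℝ} {P : Measure Ω}
    (h : f =ᵐ[P] g) : variance f P = variance g P := by
  unfold variance; rw [evariance_congr' h]

/-- The key transfer lemma: `xiSigma (σ(W)) P Z` only depends on the joint distribution
of `(W, Z)`. -/
lemma xiSigma_transfer {Ω α : Type*} [MeasurableSpace Ω] [MeasurableSpace α]
    (P : Measure Ω) [IsProbabilityMeasure P] {W W' : Ω → α} {Z Z' : Ω → ℝ}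
    (hW : Measurable W) (hW' : Measurable W') (hZ : Measurable Z) (hZ' : Measurable Z')
    (h : P.map (fun ω => (W ω, Z ω)) = P.map (fun ω => (W' ω, Z' ω))) :
    xiSigma (MeasurableSpace.comap W inferInstance) P Z
      = xiSigma (MeasurableSpace.comap W' inferInstance) P Z' := by
  have hWZ : Measurable (fun ω => (W ω, Z ω)) := hW.prodMk hZ
  have hWZ' : Measurable (fun ω => (W' ω, Z' ω)) := hW'.prodMk hZ'
  have hmapZ : P.map Z = P.map Z' := by
    have h1 : P.map Z = (P.map (fun ω => (W ω, Z ω))).map Prod.snd := by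
      rw [Measure.map_map measurable_snd hWZ]; rfl
    have h2 : P.map Z' = (P.map (fun ω => (W' ω, Z' ω))).map Prod.snd := by
      rw [Measure.map_map measurable_snd hWZ']; rfl
    rw [h1, h2, h]
  have hmapW : P.map W = P.map W' := by
    have h1 : P.map W = (P.map (fun ω => (W ω, Z ω))).map Prod.fst := by
      rw [Measure.map_map measurable_fst hWZ]; rfl
    have h2 : P.map W' = (P.map (fun ω => (W' ω, Z' ω))).map Prod.fst := by
      rw [Measure.map_map measurable_fst hWZ']; rfl
    rw [h1, h2, h]
  set κ := condDistrib Z W P with hκ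
  haveI : IsMarkovKernel κ := by rw [hκ]; infer_instance
  have hκ' : condDistrib Z' W' P = κ := by
    rw [hκ, condDistrib_def, condDistrib_def]
    have hsub : ∀ (μ ν : Measure (α × ℝ)) (_ : IsFiniteMeasure μ) (_ : IsFiniteMeasure ν),
        μ = ν → μ.condKernel = ν.condKernel := by
      rintro μ ν i1 i2 rfl; rfl
    exact hsub _ _ inferInstance inferInstance h.symm
  -- numerator integrand equality
  have hnum : ∀ y : ℝ,
      variance (P[Set.indicator {ω | y ≤ Z ω} (fun _ => (1:ℝ))
          | MeasurableSpace.comap W inferInstance]) P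
        = variance (P[Set.indicator {ω | y ≤ Z' ω} (fun _ => (1:ℝ))
          | MeasurableSpace.comap W' inferInstance]) P := by
    intro y
    set f : ℝ → ℝ := Set.indicator (Set.Ici y) (fun _ => (1:ℝ)) with hf
    have hfm : StronglyMeasurable f := stronglyMeasurable_const.indicator measurableSet_Ici
    have hcomp : ∀ (V : Ω → ℝ), Set.indicator {ω | y ≤ V ω} (fun _ => (1:ℝ))
        = fun ω => f (V ω) := by
      intro V; funext ω
      by_cases hy : y ≤ V ω <;>
        simp [hf, Set.indicator_apply, hy, Set.mem_Ici, Set.mem_setOf_eq]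
    set g : α → ℝ := fun a => (κ a (Set.Ici y)).toReal with hg
    have hgm : Measurable g := (Kernel.measurable_coe κ measurableSet_Ici).ennreal_toReal
    have hgf : ∀ a, (∫ z, f z ∂(κ a)) = g a := fun a => by
      show ∫ z, (Set.Ici y).indicator (1 : ℝ → ℝ) z ∂(κ a) = g a
      rw [integral_indicator_one measurableSet_Ici]
      rfl
    have hg01 : ∀ a, |g a| ≤ 1 := fun a => by
      rw [hg, abs_of_nonneg ENNReal.toReal_nonneg]
      simpa using ENNReal.toReal_mono ENNReal.one_ne_top (prob_le_one)
    have hint : ∀ (V : Ω → ℝ), Measurable V → Integrable (fun ω => f (V ω)) P := by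
      intro V hV
      rw [← hcomp V]
      exact (integrable_const (1:ℝ)).indicator (hV measurableSet_Ici)
    have hce1 : P[Set.indicator {ω | y ≤ Z ω} (fun _ => (1:ℝ))
        | MeasurableSpace.comap W inferInstance] =ᵐ[P] fun ω => g (W ω) := by
      rw [hcomp Z]
      refine (condExp_ae_eq_integral_condDistrib hW hZ.aemeasurable hfm (hint Z hZ)).trans ?_
      exact Filter.EventuallyEq.of_eq (funext fun ω => hgf (W ω))
    have hce2 : P[Set.indicator {ω | y ≤ Z' ω} (fun _ => (1:ℝ))
        | MeasurableSpace.comap W' inferInstance] =ᵐ[P] fun ω => g (W' ω) := by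
      rw [hcomp Z']
      refine (condExp_ae_eq_integral_condDistrib hW' hZ'.aemeasurable hfm (hint Z' hZ')).trans ?_
      refine Filter.EventuallyEq.of_eq (funext fun ω => ?_)
      rw [hκ']; exact hgf (W' ω)
    have hmem : ∀ (V : Ω → α), Measurable V → MemLp (fun ω => g (V ω)) 2 P := by
      intro V hV
      exact MemLp.of_bound ((hgm.comp hV).aestronglyMeasurable) 1
        (ae_of_all _ fun ω => hg01 (V ω))
    have hvmap : ∀ (V : Ω → α), Measurable V →
        variance (fun ω => g (V ω)) P
          = (∫ a, g a ^ 2 ∂(P.map V)) - (∫ a, g a ∂(P.map V)) ^ 2 := by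
      intro V hV
      rw [variance_eq_sub (hmem V hV)]
      rw [integral_map hV.aemeasurable ((hgm.pow_const 2).aestronglyMeasurable),
        integral_map hV.aemeasurable hgm.aestronglyMeasurable]
      rfl
    rw [variance_congr' hce1, variance_congr' hce2, hvmap W hW, hvmap W' hW', hmapW]
  -- denominator integrand equality
  have hden : ∀ y : ℝ,
      variance (Set.indicator {ω | y ≤ Z ω} (fun _ => (1:ℝ))) P
        = variance (Set.indicator {ω | y ≤ Z' ω} (fun _ => (1:ℝ))) P := by
    intro y
    have key : ∀ (V : Ω → ℝ), Measurable V →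
        variance (Set.indicator {ω | y ≤ V ω} (fun _ => (1:ℝ))) P
          = (P.map V (Set.Ici y)).toReal - ((P.map V (Set.Ici y)).toReal) ^ 2 := by
      intro V hV
      have hs : MeasurableSet {ω | y ≤ V ω} := hV measurableSet_Ici
      have hb : ∀ ω, |Set.indicator {ω | y ≤ V ω} (fun _ => (1:ℝ)) ω| ≤ 1 := by
        intro ω; by_cases hω : ω ∈ {ω | y ≤ V ω} <;> simp [Set.indicator_apply, hω]
      have hmem : MemLp (Set.indicator {ω | y ≤ V ω} (fun _ => (1:ℝ))) 2 P :=
        MemLp.of_bound ((stronglyMeasurable_const.indicator hs).aestronglyMeasurable) 1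
          (ae_of_all _ hb)
      rw [variance_eq_sub hmem]
      have hsq : (Set.indicator {ω | y ≤ V ω} (fun _ => (1:ℝ))) ^ 2
          = Set.indicator {ω | y ≤ V ω} (fun _ => (1:ℝ)) := by
        funext ω; by_cases hω : ω ∈ {ω | y ≤ V ω} <;>
          simp [Set.indicator_apply, hω]
      rw [hsq]
      have hind : P[Set.indicator {ω | y ≤ V ω} (fun _ => (1:ℝ))]
          = (P.map V (Set.Ici y)).toReal := by
        show ∫ ω, Set.indicator {ω | y ≤ V ω} (1 : Ω → ℝ) ω ∂P = _
        rw [integral_indicator_one hs, Measure.map_apply hV measurableSet_Ici]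
        rfl
      rw [hind]
    rw [key Z hZ, key Z' hZ', hmapZ]
  unfold xiSigma
  rw [hmapZ]
  congr 1
  · exact integral_congr_ae (ae_of_all _ hnum)
  · exact integral_congr_ae (ae_of_all _ hden)

/-- The extension of a permutation of `Fin q` to `Fin (p + q)` fixing the first `p`
coordinates. -/
noncomputable def permExt (p q : ℕ) (σ : Equiv.Perm (Fin q)) : Equiv.Perm (Fin (p + q)) :=
  finSumFinEquiv.permCongr (Equiv.sumCongr (Equiv.refl (Fin p)) σ)

lemma permExt_castAdd {p q : ℕ} (σ : Equiv.Perm (Fin q)) (k : Fin p) :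
    permExt p q σ (Fin.castAdd q k) = Fin.castAdd q k := by
  simp [permExt, Equiv.permCongr_apply]

lemma permExt_natAdd {p q : ℕ} (σ : Equiv.Perm (Fin q)) (j : Fin q) :
    permExt p q σ (Fin.natAdd p j) = Fin.natAdd p (σ j) := by
  simp [permExt, Equiv.permCongr_apply]

end Aux

theorem T_invariance_under_exchangeability
    {Ω : Type*} [MeasurableSpace Ω] (P : Measure Ω) [IsProbabilityMeasure P]
    {p q : ℕ} (X : Ω → (Fin p → ℝ)) (Y : Fin q → Ω → ℝ)
    (hX : Measurable X) (hY : ∀ i, Measurable (Y i))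
    (hnd : ∀ i, Nondegenerate P (Y i))
    (hexch : ∀ π : Equiv.Perm (Fin (p + q)),
      P.map (fun ω => (Fin.append (X ω) (fun j => Y j ω)) ∘ π) =
        P.map (fun ω => Fin.append (X ω) (fun j => Y j ω))) :
    ∀ σ : Equiv.Perm (Fin q), T P (fun i => Y (σ i)) X = T P Y X := by
  intro σ
  set V : Ω → (Fin (p+q) → ℝ) := fun ω => Fin.append (X ω) (fun j => Y j ω) with hV
  set Vσ : Ω → (Fin (p+q) → ℝ) := fun ω => Fin.append (X ω) (fun j => Y (σ j) ω) with hVσ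
  have hVm : Measurable V := by
    apply measurable_pi_lambda
    intro x
    refine Fin.addCases (fun k => ?_) (fun j => ?_) x
    · simpa [hV, Fin.append_left, Function.comp_def] using (measurable_pi_apply k).comp hX
    · simpa [hV, Fin.append_right] using hY j
  have hVσm : Measurable Vσ := by
    apply measurable_pi_lambda
    intro x
    refine Fin.addCases (fun k => ?_) (fun j => ?_) x
    · simpa [hVσ, Fin.append_left, Function.comp_def] using (measurable_pi_apply k).comp hX
    · simpa [hVσ, Fin.append_right] using hY (σ j)
  have hmapV : P.map Vσ = P.map V := by
    have h := hexch (permExt p q σ)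
    have he : (fun ω => (Fin.append (X ω) fun j => Y j ω) ∘ ⇑(permExt p q σ)) = Vσ := by
      funext ω
      funext x
      refine Fin.addCases (fun k => ?_) (fun j => ?_) x
      · simp [Function.comp_apply, permExt_castAdd, hVσ, Fin.append_left]
      · simp [Function.comp_apply, permExt_natAdd, hVσ, Fin.append_right]
    rwa [he] at h
  have key1 : ∀ i : Fin q,
      xiSigma (MeasurableSpace.comap X inferInstance ⊔ sigmaPast (fun k => Y (σ k)) i)
          P (Y (σ i))
        = xiSigma (MeasurableSpace.comap X inferInstance ⊔ sigmaPast Y i) P (Y i) := by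
    intro i
    set W : Ω → (Fin p → ℝ) × ({j : Fin q // j < i} → ℝ) :=
      fun ω => (X ω, fun j => Y j.1 ω) with hW
    set W' : Ω → (Fin p → ℝ) × ({j : Fin q // j < i} → ℝ) :=
      fun ω => (X ω, fun j => Y (σ j.1) ω) with hW'
    have hWm : Measurable W := hX.prodMk (measurable_pi_lambda _ fun j => hY j.1)
    have hW'm : Measurable W' := hX.prodMk (measurable_pi_lambda _ fun j => hY (σ j.1))
    have hσalg : MeasurableSpace.comap X inferInstance ⊔ sigmaPast Y i
        = MeasurableSpace.comap W inferInstance := by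
      rw [sigmaPast_eq, ← comap_pair_eq X (fun ω (j : {j : Fin q // j < i}) => Y j.1 ω)]
    have hσalg' : MeasurableSpace.comap X inferInstance ⊔ sigmaPast (fun k => Y (σ k)) i
        = MeasurableSpace.comap W' inferInstance := by
      rw [sigmaPast_eq, ← comap_pair_eq X (fun ω (j : {j : Fin q // j < i}) => Y (σ j.1) ω)]
    set Φ : (Fin (p+q) → ℝ) → ((Fin p → ℝ) × ({j : Fin q // j < i} → ℝ)) × ℝ :=
      fun v => ((fun k => v (Fin.castAdd q k), fun j => v (Fin.natAdd p j.1)),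
        v (Fin.natAdd p i)) with hΦ
    have hΦm : Measurable Φ :=
      ((measurable_pi_lambda _ fun k => measurable_pi_apply _).prodMk
        (measurable_pi_lambda _ fun j => measurable_pi_apply _)).prodMk (measurable_pi_apply _)
    have e1 : (fun ω => (W ω, Y i ω)) = Φ ∘ V := by
      funext ω
      simp [hΦ, hW, hV, Function.comp_apply, Fin.append_left, Fin.append_right]
    have e2 : (fun ω => (W' ω, Y (σ i) ω)) = Φ ∘ Vσ := by
      funext ω
      simp [hΦ, hW', hVσ, Function.comp_apply, Fin.append_left, Fin.append_right]
    have hjoint : P.map (fun ω => (W' ω, Y (σ i) ω)) = P.map (fun ω => (W ω, Y i ω)) := by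
      rw [e1, e2, ← Measure.map_map hΦm hVσm, ← Measure.map_map hΦm hVm, hmapV]
    rw [hσalg, hσalg']
    exact xiSigma_transfer P hW'm hWm (hY (σ i)) (hY i) hjoint
  have key2 : ∀ i : Fin q,
      xiSigma (sigmaPast (fun k => Y (σ k)) i) P (Y (σ i))
        = xiSigma (sigmaPast Y i) P (Y i) := by
    intro i
    set W : Ω → ({j : Fin q // j < i} → ℝ) := fun ω j => Y j.1 ω with hW
    set W' : Ω → ({j : Fin q // j < i} → ℝ) := fun ω j => Y (σ j.1) ω with hW'
    have hWm : Measurable W := measurable_pi_lambda _ fun j => hY j.1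
    have hW'm : Measurable W' := measurable_pi_lambda _ fun j => hY (σ j.1)
    set Φ : (Fin (p+q) → ℝ) → ({j : Fin q // j < i} → ℝ) × ℝ :=
      fun v => (fun j => v (Fin.natAdd p j.1), v (Fin.natAdd p i)) with hΦ
    have hΦm : Measurable Φ :=
      (measurable_pi_lambda _ fun j => measurable_pi_apply _).prodMk (measurable_pi_apply _)
    have e1 : (fun ω => (W ω, Y i ω)) = Φ ∘ V := by
      funext ω
      simp [hΦ, hW, hV, Function.comp_apply, Fin.append_right]
    have e2 : (fun ω => (W' ω, Y (σ i) ω)) = Φ ∘ Vσ := by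
      funext ω
      simp [hΦ, hW', hVσ, Function.comp_apply, Fin.append_right]
    have hjoint : P.map (fun ω => (W' ω, Y (σ i) ω)) = P.map (fun ω => (W ω, Y i ω)) := by
      rw [e1, e2, ← Measure.map_map hΦm hVσm, ← Measure.map_map hΦm hVm, hmapV]
    rw [sigmaPast_eq, sigmaPast_eq]
    exact xiSigma_transfer P hW'm hWm (hY (σ i)) (hY i) hjoint
  unfold T
  rw [Finset.sum_congr rfl (fun i _ => key1 i), Finset.sum_congr rfl (fun i _ => key2 i)]
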